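/- Let B₁ ⊆ cl(B₁) ⊆ B₂ be open balls in ℂ^d with B₁ nonempty, let f be holomorphic on an open set containing B₁, and suppose for each n there is a holomorphic Fₙ : B₂ → ℂ with |Fₙ| ≤ M on B₂ and Fₙ = fₙ on B₁, where fₙ are holomorphic and fₙ → f pointwise on B₁. Then there exists a holomorphic F : B₂ → ℂ with |F| ≤ M on B₂ and F = f on B₁. -/

import Mathlib

open Metric Set Filter
open scoped Topology Uniformity

/-- Schwarz-type estimate: a bounded holomorphic function on a ball is Lipschitz
from the center. -/
lemma key1 {E : Type*} [NormedAddCommGroup E] [NormedSpace ℂ E] {g : E → ℂ} {z w : E} {R C : ℝ}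
    (hd : DifferentiableOn ℂ g (ball z R)) (hC : ∀ x ∈ ball z R, ‖g x‖ ≤ C)
    (hw : w ∈ ball z R) : ‖g w - g z‖ ≤ 2 * C / R * ‖w - z‖ := by
  have hR : 0 < R := dist_nonneg.trans_lt (mem_ball.mp hw)
  have hC0 : 0 ≤ C := (norm_nonneg _).trans (hC z (mem_ball_self hR))
  rcases eq_or_ne w z with rfl | hne
  · simp
  have hwz : 0 < ‖w - z‖ := norm_pos_iff.mpr (sub_ne_zero.mpr hne)
  set ρ : ℝ := R / ‖w - z‖ with hρ
  have hwzR : ‖w - z‖ < R := by rw [← dist_eq_norm]; exact mem_ball.mp hw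
  have hρ1 : 1 < ρ := (one_lt_div hwz).mpr hwzR
  set A : ℂ → E := fun t => z + t • (w - z) with hA
  have hmapsA : MapsTo A (ball (0:ℂ) ρ) (ball z R) := by
    intro t ht
    simp only [hA, mem_ball, dist_eq_norm] at ht ⊢
    have h1 : ‖z + t • (w - z) - z‖ = ‖t‖ * ‖w - z‖ := by
      rw [add_sub_cancel_left, norm_smul]
    rw [h1]
    calc ‖t‖ * ‖w - z‖ < ρ * ‖w - z‖ := by
          apply mul_lt_mul_of_pos_right _ hwz
          simpa using ht
      _ = R := div_mul_cancel₀ _ hwz.ne'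
  have hdA : Differentiable ℂ A := (differentiable_id.smul_const (w - z)).const_add z
  have hdh : DifferentiableOn ℂ (g ∘ A) (ball (0:ℂ) ρ) :=
    hd.comp hdA.differentiableOn hmapsA
  have h0 : (g ∘ A) 0 = g z := by simp [hA]
  have h1' : (g ∘ A) 1 = g w := by simp [hA]
  have h1mem : (1:ℂ) ∈ ball (0:ℂ) ρ := by
    rw [mem_ball, dist_zero_right, norm_one]; exact hρ1
  refine le_of_forall_pos_le_add fun ε hε => ?_
  set D : ℝ := 2 * C + ε * R / ‖w - z‖ with hD
  have hmaps : MapsTo (g ∘ A) (ball (0:ℂ) ρ) (ball ((g ∘ A) 0) D) := by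
    intro t ht
    rw [mem_ball, dist_eq_norm, h0]
    have hb : ‖g (A t) - g z‖ ≤ 2 * C := by
      calc ‖g (A t) - g z‖ ≤ ‖g (A t)‖ + ‖g z‖ := norm_sub_le _ _
        _ ≤ C + C := add_le_add (hC _ (hmapsA ht)) (hC z (mem_ball_self hR))
        _ = 2 * C := by ring
    have hpos : 0 < ε * R / ‖w - z‖ := by positivity
    calc ‖(g ∘ A) t - g z‖ ≤ 2 * C := hb
      _ < D := by rw [hD]; linarith
  have hkey := Complex.dist_le_div_mul_dist_of_mapsTo_ball hdh (hmaps.mono_right ball_subset_closedBall) h1mem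
  rw [h1', h0, dist_eq_norm] at hkey
  have hdist : dist (1:ℂ) (0:ℂ) = 1 := by simp
  rw [hdist, mul_one] at hkey
  refine hkey.trans (le_of_eq ?_)
  rw [hD, hρ]
  field_simp

/-- Cauchy-type estimate: derivative bound for a bounded holomorphic function. -/
lemma key2 {E : Type*} [NormedAddCommGroup E] [NormedSpace ℂ E] {g : E → ℂ} {z : E} {R C : ℝ}
    (hR : 0 < R) (hd : DifferentiableOn ℂ g (ball z R)) (hC : ∀ x ∈ ball z R, ‖g x‖ ≤ C) :
    ‖fderiv ℂ g z‖ ≤ 2 * C / R := by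
  have hC0 : 0 ≤ C := (norm_nonneg _).trans (hC z (mem_ball_self hR))
  refine norm_fderiv_le_of_lip' ℂ (by positivity) ?_
  filter_upwards [isOpen_ball.eventually_mem (mem_ball_self hR)] with x hx
  exact key1 hd hC hx

theorem stmt3 {d : ℕ} (c₁ c₂ : EuclideanSpace ℂ (Fin d)) (r₁ r₂ : ℝ)
    (hr₁ : 0 < r₁)
    (hsub : closedBall c₁ r₁ ⊆ ball c₂ r₂)
    (f : EuclideanSpace ℂ (Fin d) → ℂ)
    (hf : ∃ W : Set (EuclideanSpace ℂ (Fin d)),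
      IsOpen W ∧ ball c₁ r₁ ⊆ W ∧ DifferentiableOn ℂ f W)
    (M : ℝ)
    (fseq : ℕ → EuclideanSpace ℂ (Fin d) → ℂ)
    (hfseq : ∀ n, DifferentiableOn ℂ (fseq n) (ball c₁ r₁))
    (hconv : ∀ z ∈ ball c₁ r₁, Tendsto (fun n => fseq n z) atTop (nhds (f z)))
    (Fseq : ℕ → EuclideanSpace ℂ (Fin d) → ℂ)
    (hFseq : ∀ n, DifferentiableOn ℂ (Fseq n) (ball c₂ r₂))
    (hFbd : ∀ n, ∀ z ∈ ball c₂ r₂, ‖Fseq n z‖ ≤ M)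
    (hFeq : ∀ n, EqOn (Fseq n) (fseq n) (ball c₁ r₁)) :
    ∃ F : EuclideanSpace ℂ (Fin d) → ℂ,
      DifferentiableOn ℂ F (ball c₂ r₂) ∧
      (∀ z ∈ ball c₂ r₂, ‖F z‖ ≤ M) ∧
      EqOn F f (ball c₁ r₁) := by
  classical
  have hφne : (↑(Ultrafilter.of (atTop : Filter ℕ)) : Filter ℕ).NeBot := Ultrafilter.neBot _
  set φ : Filter ℕ := ↑(Ultrafilter.of (atTop : Filter ℕ)) with hφ
  haveI : φ.NeBot := hφne
  have hφle : φ ≤ atTop := Ultrafilter.of_le _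
  obtain ⟨z₁, hz₁⟩ : (ball c₁ r₁).Nonempty := nonempty_ball.mpr hr₁
  have hz₁2 : z₁ ∈ ball c₂ r₂ := hsub (ball_subset_closedBall hz₁)
  have hM : 0 ≤ M := (norm_nonneg _).trans (hFbd 0 z₁ hz₁2)
  -- pointwise ultrafilter limits exist
  have hex : ∀ z ∈ ball c₂ r₂, ∃ L : ℂ, Tendsto (fun n => Fseq n z) φ (𝓝 L) := by
    intro z hz
    have hmem : ∀ n, Fseq n z ∈ closedBall (0:ℂ) M := fun n => by
      simpa [mem_closedBall, dist_eq_norm] using hFbd n z hz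
    obtain ⟨L, _, hL⟩ := (isCompact_closedBall (0:ℂ) M).ultrafilter_le_nhds
      ((Ultrafilter.of (atTop : Filter ℕ)).map (fun n => Fseq n z))
      (by rw [Ultrafilter.coe_map]
          exact le_principal_iff.mpr (mem_map.mpr (Eventually.of_forall hmem)))
    rw [Ultrafilter.coe_map] at hL
    exact ⟨L, hL⟩
  set F : EuclideanSpace ℂ (Fin d) → ℂ :=
    fun z => if h : ∃ L : ℂ, Tendsto (fun n => Fseq n z) φ (𝓝 L) then h.choose else 0 with hFdef
  have hF : ∀ z ∈ ball c₂ r₂, Tendsto (fun n => Fseq n z) φ (𝓝 (F z)) := by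
    intro z hz
    have h := hex z hz
    simp only [hFdef, dif_pos h]
    exact h.choose_spec
  refine ⟨F, ?_, ?_, ?_⟩
  · -- DifferentiableOn
    intro z₀ hz₀
    obtain ⟨ε, hε, hball⟩ := Metric.isOpen_iff.mp isOpen_ball z₀ hz₀
    set ρ : ℝ := ε / 8 with hρdef
    have hρ : 0 < ρ := by positivity
    have hsubB : closedBall z₀ (5 * ρ) ⊆ ball c₂ r₂ := by
      intro x hx
      apply hball
      rw [mem_ball]
      calc dist x z₀ ≤ 5 * ρ := mem_closedBall.mp hx
        _ < ε := by rw [hρdef]; linarith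
    set t : Set (EuclideanSpace ℂ (Fin d)) := closedBall z₀ ρ with htdef
    set s : Set (EuclideanSpace ℂ (Fin d)) := ball z₀ (ρ / 4) with hsdef
    have htB : t ⊆ ball c₂ r₂ :=
      (closedBall_subset_closedBall (by linarith)).trans hsubB
    have hst' : s ⊆ t :=
      (ball_subset_ball (by linarith)).trans ball_subset_closedBall
    have hdiff : ∀ n, ∀ x ∈ ball c₂ r₂, DifferentiableAt ℂ (Fseq n) x := fun n x hx =>
      (hFseq n).differentiableAt (isOpen_ball.mem_nhds hx)
    set K : ℝ := 2 * M / (4 * ρ) with hKdef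
    have hK0 : 0 ≤ K := by positivity
    -- equi-Lipschitz estimate on t
    have hLip : ∀ n, ∀ z ∈ t, ∀ w ∈ t, ‖Fseq n w - Fseq n z‖ ≤ K * ‖w - z‖ := by
      intro n z hz w hw
      have hsub4 : ball z (4 * ρ) ⊆ ball c₂ r₂ := by
        intro x hx
        apply hsubB
        rw [mem_closedBall]
        calc dist x z₀ ≤ dist x z + dist z z₀ := dist_triangle _ _ _
          _ ≤ 4 * ρ + ρ := add_le_add (mem_ball.mp hx).le (mem_closedBall.mp hz)
          _ = 5 * ρ := by ring
      have hw' : w ∈ ball z (4 * ρ) := by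
        rw [mem_ball]
        calc dist w z ≤ dist w z₀ + dist z₀ z := dist_triangle _ _ _
          _ ≤ ρ + ρ := add_le_add (mem_closedBall.mp hw)
              (by rw [dist_comm]; exact mem_closedBall.mp hz)
          _ < 4 * ρ := by linarith
      exact key1 ((hFseq n).mono hsub4) (fun x hx => hFbd n x (hsub4 hx)) hw'
    have hFLip : ∀ z ∈ t, ∀ w ∈ t, ‖F w - F z‖ ≤ K * ‖w - z‖ := by
      intro z hz w hw
      have h1 : Tendsto (fun n => ‖Fseq n w - Fseq n z‖) φ (𝓝 ‖F w - F z‖) :=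
        ((hF w (htB hw)).sub (hF z (htB hz))).norm
      exact le_of_tendsto h1 (Eventually.of_forall fun n => hLip n z hz w hw)
    -- uniform convergence on t
    have hunif : TendstoUniformlyOn Fseq F φ t := by
      rw [Metric.tendstoUniformlyOn_iff]
      intro η hη
      set δ : ℝ := η / (4 * (K + 1)) with hδdef
      have hδpos : 0 < δ := by positivity
      have hcov : t ⊆ ⋃ x ∈ t, ball x δ := fun x hx =>
        mem_biUnion hx (mem_ball_self hδpos)
      obtain ⟨u, hut, hufin, hcov'⟩ :=
        (isCompact_closedBall z₀ ρ).elim_finite_subcover_image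
          (fun x _ => isOpen_ball) hcov
      have hev : ∀ᶠ n in φ, ∀ x ∈ u, dist (F x) (Fseq n x) < η / 4 := by
        rw [hufin.eventually_all]
        intro x hx
        have h2 := Metric.tendsto_nhds.mp (hF x (htB (hut hx))) (η / 4) (by positivity)
        exact h2.mono fun n hn => by rwa [dist_comm]
      filter_upwards [hev] with n hn x hx
      obtain ⟨i, hiu, hxi⟩ := mem_iUnion₂.mp (hcov' hx)
      have d1 : dist (F x) (F i) ≤ K * δ := by
        rw [dist_eq_norm]
        calc ‖F x - F i‖ ≤ K * ‖x - i‖ := hFLip i (hut hiu) x hx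
          _ ≤ K * δ := mul_le_mul_of_nonneg_left
              (by rw [← dist_eq_norm]; exact (mem_ball.mp hxi).le) hK0
      have d3 : dist (Fseq n i) (Fseq n x) ≤ K * δ := by
        rw [dist_eq_norm]
        calc ‖Fseq n i - Fseq n x‖ ≤ K * ‖i - x‖ := hLip n x hx i (hut hiu)
          _ ≤ K * δ := mul_le_mul_of_nonneg_left
              (by rw [← dist_eq_norm, dist_comm]; exact (mem_ball.mp hxi).le) hK0
      have d2 : dist (F i) (Fseq n i) < η / 4 := hn i hiu
      have hKδ : K * δ ≤ η / 4 := by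
        have h1 : K * δ ≤ (K + 1) * δ := by nlinarith
        have h2 : (K + 1) * δ = η / 4 := by
          rw [hδdef]; field_simp
        linarith
      calc dist (F x) (Fseq n x)
          ≤ dist (F x) (F i) + dist (F i) (Fseq n i) + dist (Fseq n i) (Fseq n x) :=
            dist_triangle4 _ _ _ _
        _ < η / 4 + η / 4 + η / 4 := by
            have := d1.trans hKδ
            have := d3.trans hKδ
            -- need strict
            linarith
        _ < η := by linarith
    have hcauchy : UniformCauchySeqOn Fseq φ t := hunif.uniformCauchySeqOn
    set G : ℕ → EuclideanSpace ℂ (Fin d) → (EuclideanSpace ℂ (Fin d) →L[ℂ] ℂ) :=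
      fun n x => fderiv ℂ (Fseq n) x with hGdef
    have hst : ∀ x ∈ s, ball x (ρ / 2) ⊆ t := by
      intro x hx y hy
      rw [htdef, mem_closedBall]
      calc dist y z₀ ≤ dist y x + dist x z₀ := dist_triangle _ _ _
        _ ≤ ρ / 2 + ρ / 4 := add_le_add (mem_ball.mp hy).le (mem_ball.mp hx).le
        _ ≤ ρ := by linarith
    -- uniform Cauchy of derivatives on s
    have hGcauchy : UniformCauchySeqOn G φ s := by
      intro v hv
      obtain ⟨η, hη, hηv⟩ := Metric.mem_uniformity_dist.mp hv
      have hmem : {p : ℂ × ℂ | dist p.1 p.2 < η * ρ / 8} ∈ 𝓤 ℂ :=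
        Metric.dist_mem_uniformity (by positivity)
      filter_upwards [hcauchy _ hmem] with m hm x hx
      apply hηv
      have hxB : x ∈ ball c₂ r₂ := htB (hst' hx)
      have hsubx : ball x (ρ / 2) ⊆ ball c₂ r₂ := fun y hy => htB (hst x hx hy)
      have hgd : DifferentiableOn ℂ (fun y => Fseq m.1 y - Fseq m.2 y) (ball x (ρ / 2)) :=
        ((hFseq m.1).mono hsubx).sub ((hFseq m.2).mono hsubx)
      have hgb : ∀ y ∈ ball x (ρ / 2), ‖Fseq m.1 y - Fseq m.2 y‖ ≤ η * ρ / 8 := fun y hy =>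
        le_of_lt (by simpa [dist_eq_norm] using hm y (hst x hx hy))
      have hkey := key2 (by positivity : (0:ℝ) < ρ / 2) hgd hgb
      have heq : fderiv ℂ (fun y => Fseq m.1 y - Fseq m.2 y) x = G m.1 x - G m.2 x :=
        fderiv_sub (hdiff m.1 x hxB) (hdiff m.2 x hxB)
      rw [heq] at hkey
      rw [dist_eq_norm]
      calc ‖G m.1 x - G m.2 x‖ ≤ 2 * (η * ρ / 8) / (ρ / 2) := hkey
        _ = η / 2 := by field_simp; ring
        _ < η := by linarith
    have hGex : ∀ x ∈ s, ∃ L, Tendsto (fun n => G n x) φ (𝓝 L) := by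
      intro x hx
      obtain ⟨L, hL⟩ := CompleteSpace.complete (hGcauchy.cauchy_map hx)
      exact ⟨L, hL⟩
    set g' : EuclideanSpace ℂ (Fin d) → (EuclideanSpace ℂ (Fin d) →L[ℂ] ℂ) :=
      fun x => if h : ∃ L, Tendsto (fun n => G n x) φ (𝓝 L) then h.choose else 0 with hg'def
    have hg' : ∀ x ∈ s, Tendsto (fun n => G n x) φ (𝓝 (g' x)) := by
      intro x hx
      have h := hGex x hx
      simp only [hg'def, dif_pos h]
      exact h.choose_spec
    have hGunif : TendstoUniformlyOn G g' φ s :=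
      hGcauchy.tendstoUniformlyOn_of_tendsto hg'
    have hmain : HasFDerivAt F (g' z₀) z₀ :=
      hasFDerivAt_of_tendstoUniformlyOn isOpen_ball hGunif
        (fun n x hx => (hdiff n x (htB (hst' hx))).hasFDerivAt)
        (fun x hx => hF x (htB (hst' hx)))
        (mem_ball_self (by positivity))
    exact hmain.differentiableAt.differentiableWithinAt
  · -- bound
    intro z hz
    exact le_of_tendsto (hF z hz).norm (Eventually.of_forall fun n => hFbd n z hz)
  · -- EqOn F f on the small ball
    intro z hz
    have h1 : Tendsto (fun n => Fseq n z) φ (𝓝 (f z)) :=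
      ((hconv z hz).mono_left hφle).congr fun n => (hFeq n hz).symm
    exact tendsto_nhds_unique (hF z (hsub (ball_subset_closedBall hz))) h1
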